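/- There exist constants θ_*, θ^*, C_*, h̄ > 0 such that for every integer N ≥ 1 with h = T/N < h̄ and every pair of integers 0 ≤ k ≤ n ≤ N−1 the following hold: (1) if θ_*·h ≤ y^n_k ≤ θ^*/h then k_u(n,k) = k+1, k_d(n,k) = k, y^{n+1}_{k_u(n,k)} = y^n_k + (σ²/4)h + σ√(y^n_k h) and y^{n+1}_{k_d(n,k)} = y^n_k + (σ²/4)h − σ√(y^n_k h); (2) if y^n_k < θ_*·h then k_d(n,k) = k and 0 ≤ y^{n+1}_{k_u(n,k)} − y^n_k ≤ C_*·h; (3) if y^n_k > θ^*/h then k_u(n,k) = k+1; (4) y^{n+1}_{k_u(n,k)} > y^{n+1}_{k_d(n,k)}, the ratio (μ_Y(y^n_k)h + y^n_k − y^{n+1}_{k_d(n,k)}) / (y^{n+1}_{k_u(n,k)} − y^{n+1}_{k_d(n,k)}) lies in [0,1], hence p_u(n,k) equals this ratio and p_d(n,k) = (y^{n+1}_{k_u(n,k)} − y^n_k − μ_Y(y^n_k)h) / (y^{n+1}_{k_u(n,k)} − y^{n+1}_{k_d(n,k)}). -/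

import Mathlib

open MeasureTheory

noncomputable section

open Classical in
/-- The node `y^n_k` of the CIR 'multiple jumps' binomial tree with time step `h`:
`y^n_k = (√Y₀ + (σ/2)(2k-n)√h)²` if `√Y₀ + (σ/2)(2k-n)√h > 0`, and `0` otherwise. -/
def ynode (σ Y0 h : ℝ) (n k : ℕ) : ℝ :=
  if 0 < Real.sqrt Y0 + σ / 2 * (2 * (k : ℝ) - (n : ℝ)) * Real.sqrt h then
    (Real.sqrt Y0 + σ / 2 * (2 * (k : ℝ) - (n : ℝ)) * Real.sqrt h) ^ 2
  else 0

open Classical in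
/-- The 'up' jump index `k_u(n,k)`, with default `n+1` when the set is empty. -/
def kuF (κ θ σ Y0 h : ℝ) (n k : ℕ) : ℕ :=
  if ∃ k' : ℕ, k + 1 ≤ k' ∧ k' ≤ n + 1 ∧
      ynode σ Y0 h n k + κ * (θ - ynode σ Y0 h n k) * h ≤ ynode σ Y0 h (n + 1) k' then
    sInf {k' : ℕ | k + 1 ≤ k' ∧ k' ≤ n + 1 ∧
      ynode σ Y0 h n k + κ * (θ - ynode σ Y0 h n k) * h ≤ ynode σ Y0 h (n + 1) k'}
  else n + 1

open Classical in
/-- The 'down' jump index `k_d(n,k)`, with default `0` when the set is empty. -/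
def kdF (κ θ σ Y0 h : ℝ) (n k : ℕ) : ℕ :=
  if ∃ k' : ℕ, k' ≤ k ∧
      ynode σ Y0 h (n + 1) k' ≤ ynode σ Y0 h n k + κ * (θ - ynode σ Y0 h n k) * h then
    sSup {k' : ℕ | k' ≤ k ∧
      ynode σ Y0 h (n + 1) k' ≤ ynode σ Y0 h n k + κ * (θ - ynode σ Y0 h n k) * h}
  else 0

/-- The 'up' transition probability
`p_u(n,k) = 0 ∨ ((μ_Y(y^n_k)h + y^n_k - y^{n+1}_{k_d})/(y^{n+1}_{k_u} - y^{n+1}_{k_d})) ∧ 1`. -/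
def puF (κ θ σ Y0 h : ℝ) (n k : ℕ) : ℝ :=
  max 0 (min 1 ((κ * (θ - ynode σ Y0 h n k) * h + ynode σ Y0 h n k
      - ynode σ Y0 h (n + 1) (kdF κ θ σ Y0 h n k)) /
    (ynode σ Y0 h (n + 1) (kuF κ θ σ Y0 h n k)
      - ynode σ Y0 h (n + 1) (kdF κ θ σ Y0 h n k))))

/-- The 'down' transition probability `p_d(n,k) = 1 - p_u(n,k)`. -/
def pdF (κ θ σ Y0 h : ℝ) (n k : ℕ) : ℝ := 1 - puF κ θ σ Y0 h n k

namespace CIR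

def xc (σ Y0 h : ℝ) (n k : ℕ) : ℝ :=
  Real.sqrt Y0 + σ / 2 * (2 * (k : ℝ) - (n : ℝ)) * Real.sqrt h

lemma ynode_eq (σ Y0 h : ℝ) (n k : ℕ) :
    ynode σ Y0 h n k = (max (xc σ Y0 h n k) 0) ^ 2 := by
  unfold ynode xc
  split_ifs with hx
  · rw [max_eq_left hx.le]
  · rw [max_eq_right (le_of_not_gt hx)]; ring

lemma sq_max_mono {a b : ℝ} (hab : a ≤ b) : (max a 0)^2 ≤ (max b 0)^2 :=
  pow_le_pow_left₀ (le_max_right a 0) (max_le_max hab le_rfl) 2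

lemma xc_up (σ Y0 h : ℝ) (n k : ℕ) :
    xc σ Y0 h (n+1) (k+1) = xc σ Y0 h n k + σ / 2 * Real.sqrt h := by
  unfold xc; push_cast; ring

lemma xc_down (σ Y0 h : ℝ) (n k : ℕ) :
    xc σ Y0 h (n+1) k = xc σ Y0 h n k - σ / 2 * Real.sqrt h := by
  unfold xc; push_cast; ring

lemma xc_step (σ Y0 h : ℝ) (n k : ℕ) :
    xc σ Y0 h n (k+1) = xc σ Y0 h n k + σ * Real.sqrt h := by
  unfold xc; push_cast; ring

lemma xc_mono (σ Y0 h : ℝ) (hσ : 0 ≤ σ) (n : ℕ) {k k' : ℕ} (hk : k ≤ k') :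
    xc σ Y0 h n k ≤ xc σ Y0 h n k' := by
  unfold xc
  have h1 : (k:ℝ) ≤ (k':ℝ) := by exact_mod_cast hk
  have hs := Real.sqrt_nonneg h
  nlinarith [mul_nonneg (mul_nonneg hσ hs) (sub_nonneg.2 h1)]

lemma ynode_nonneg (σ Y0 h : ℝ) (n k : ℕ) : 0 ≤ ynode σ Y0 h n k := by
  rw [ynode_eq]; positivity

lemma ynode_pos_eq {σ Y0 h : ℝ} {n k : ℕ} (hy : 0 < ynode σ Y0 h n k) :
    0 < xc σ Y0 h n k ∧ ynode σ Y0 h n k = (xc σ Y0 h n k)^2 := by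
  rw [ynode_eq] at hy ⊢
  rcases le_or_gt (xc σ Y0 h n k) 0 with hx | hx
  · rw [max_eq_right hx] at hy; simp at hy
  · exact ⟨hx, by rw [max_eq_left hx.le]⟩

def Su (κ θ σ Y0 h : ℝ) (n k : ℕ) : Set ℕ :=
  {k' : ℕ | k + 1 ≤ k' ∧ k' ≤ n + 1 ∧
    ynode σ Y0 h n k + κ * (θ - ynode σ Y0 h n k) * h ≤ ynode σ Y0 h (n + 1) k'}

def Sd (κ θ σ Y0 h : ℝ) (n k : ℕ) : Set ℕ :=
  {k' : ℕ | k' ≤ k ∧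
    ynode σ Y0 h (n + 1) k' ≤ ynode σ Y0 h n k + κ * (θ - ynode σ Y0 h n k) * h}

lemma kuF_eq {κ θ σ Y0 h : ℝ} {n k : ℕ} (hne : (Su κ θ σ Y0 h n k).Nonempty) :
    kuF κ θ σ Y0 h n k = sInf (Su κ θ σ Y0 h n k) := by
  rw [kuF, if_pos]
  · rfl
  · obtain ⟨j, hj⟩ := hne
    exact ⟨j, hj.1, hj.2.1, hj.2.2⟩

lemma kdF_eq {κ θ σ Y0 h : ℝ} {n k : ℕ} (hne : (Sd κ θ σ Y0 h n k).Nonempty) :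
    kdF κ θ σ Y0 h n k = sSup (Sd κ θ σ Y0 h n k) := by
  rw [kdF, if_pos]
  · rfl
  · obtain ⟨j, hj⟩ := hne
    exact ⟨j, hj.1, hj.2⟩

lemma ku_mem {κ θ σ Y0 h : ℝ} {n k : ℕ} (hne : (Su κ θ σ Y0 h n k).Nonempty) :
    kuF κ θ σ Y0 h n k ∈ Su κ θ σ Y0 h n k := by
  rw [kuF_eq hne]; exact Nat.sInf_mem hne

lemma ku_le {κ θ σ Y0 h : ℝ} {n k : ℕ} {j : ℕ} (hj : j ∈ Su κ θ σ Y0 h n k) :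
    kuF κ θ σ Y0 h n k ≤ j := by
  rw [kuF_eq ⟨j, hj⟩]; exact Nat.sInf_le hj

lemma ku_notmem {κ θ σ Y0 h : ℝ} {n k : ℕ} (hne : (Su κ θ σ Y0 h n k).Nonempty)
    {j : ℕ} (hj : j < kuF κ θ σ Y0 h n k) : j ∉ Su κ θ σ Y0 h n k := by
  rw [kuF_eq hne] at hj; exact Nat.notMem_of_lt_sInf hj

lemma Sd_bdd (κ θ σ Y0 h : ℝ) (n k : ℕ) : BddAbove (Sd κ θ σ Y0 h n k) :=
  ⟨k, fun _ hj => hj.1⟩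

lemma kd_mem {κ θ σ Y0 h : ℝ} {n k : ℕ} (hne : (Sd κ θ σ Y0 h n k).Nonempty) :
    kdF κ θ σ Y0 h n k ∈ Sd κ θ σ Y0 h n k := by
  rw [kdF_eq hne]; exact Nat.sSup_mem hne (Sd_bdd κ θ σ Y0 h n k)

lemma kd_ge {κ θ σ Y0 h : ℝ} {n k : ℕ} {j : ℕ} (hj : j ∈ Sd κ θ σ Y0 h n k) :
    j ≤ kdF κ θ σ Y0 h n k := by
  rw [kdF_eq ⟨j, hj⟩]; exact le_csSup (Sd_bdd κ θ σ Y0 h n k) hj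

lemma le_of_sq_le_sq {a b : ℝ} (hb : 0 ≤ b) (h : a^2 ≤ b^2) : a ≤ b := by
  rcases le_or_gt a 0 with ha | ha
  · linarith
  · nlinarith


lemma sqrt_sq_mul {x h : ℝ} (hx : 0 ≤ x) :
    Real.sqrt (x^2 * h) = x * Real.sqrt h := by
  rw [Real.sqrt_mul (sq_nonneg x), Real.sqrt_sq hx]

lemma sq_expand_plus {σ h sh x : ℝ} (hs2 : sh * sh = h) :
    (x + σ/2*sh)^2 = x^2 + σ^2/4*h + σ*(x*sh) := by rw [← hs2]; ring

lemma sq_expand_minus {σ h sh x : ℝ} (hs2 : sh * sh = h) :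
    (x - σ/2*sh)^2 = x^2 + σ^2/4*h - σ*(x*sh) := by rw [← hs2]; ring

/-- `k ∈ S_d` computation: `(x - a)² ≤ x² + κ(θ - x²)h` when `x² h ≤ σ²/(4κ²)`. -/
lemma calc_down {κ θ σ h sh x : ℝ} (hκ : 0 < κ) (hθ : 0 < θ) (hσ : 0 < σ) (hh : 0 < h)
    (hs2 : sh * sh = h) (hsh : 0 < sh) (hc : σ/2*sh < x)
    (hxh : x^2 * h ≤ σ^2/(4*κ^2)) :
    (x - σ/2*sh)^2 ≤ x^2 + κ*(θ - x^2)*h := by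
  have hx : 0 < x := lt_trans (by positivity) hc
  have hκx : κ * (x*sh) ≤ σ/2 := by
    apply le_of_sq_le_sq (by positivity)
    have h1 : (κ*(x*sh))^2 = κ^2 * (x^2*h) := by rw [← hs2]; ring
    have h2 : κ^2 * (σ^2/(4*κ^2)) = (σ/2)^2 := by field_simp; ring
    rw [h1, ← h2]
    exact mul_le_mul_of_nonneg_left hxh (by positivity)
  have ha2 : (σ/2*sh)^2 = σ^2/4*h := by rw [← hs2]; ring
  have hκ2 : κ*(x^2*h) ≤ σ/2*(x*sh) := by
    have hq := mul_le_mul_of_nonneg_right hκx (by positivity : (0:ℝ) ≤ x*sh)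
    have hqq : κ*(x*sh)*(x*sh) = κ*(x^2*h) := by rw [← hs2]; ring
    linarith [hqq ▸ hq]
  have hσ4 : σ^2/4*h ≤ σ/2*(x*sh) := by
    have hq := mul_le_mul_of_nonneg_left hc.le (by positivity : (0:ℝ) ≤ σ/2*sh)
    nlinarith [ha2, hq]
  nlinarith [mul_pos (mul_pos hκ hθ) hh]

/-- `k+1 ∈ S_u` computation: `x² + κ(θ - x²)h ≤ (x + a)²` when `θlow h ≤ x²`. -/
lemma calc_up {κ θ σ h sh x θlow : ℝ} (hκ : 0 < κ) (hθ : 0 < θ) (hσ : 0 < σ) (hh : 0 < h)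
    (hs2 : sh * sh = h) (hsh : 0 < sh) (hx0 : 0 ≤ x)
    (hθl_ge : (κ*θ/σ)^2 ≤ θlow) (hxl : θlow * h ≤ x^2) :
    x^2 + κ*(θ - x^2)*h ≤ (x + σ/2*sh)^2 := by
  have hκθx : κ*θ*h ≤ σ*(x*sh) := by
    apply le_of_sq_le_sq (by positivity)
    have h1 : (σ*(x*sh))^2 = σ^2 * x^2 * h := by rw [← hs2]; ring
    have h2 : σ^2*(κ*θ/σ)^2 = (κ*θ)^2 := by field_simp
    have key : (κ*θ)^2 ≤ σ^2 * θlow := by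
      have := mul_le_mul_of_nonneg_left hθl_ge (by positivity : (0:ℝ) ≤ σ^2)
      linarith [h2 ▸ this]
    have k1 : (κ*θ)^2 * h^2 ≤ σ^2*θlow*h^2 :=
      mul_le_mul_of_nonneg_right key (by positivity)
    have k2 : σ^2*(θlow*h)*h ≤ σ^2*x^2*h :=
      mul_le_mul_of_nonneg_right (mul_le_mul_of_nonneg_left hxl
        (by positivity : (0:ℝ) ≤ σ^2)) hh.le
    rw [h1]
    nlinarith [k1, k2]
  have ha2 : (σ/2*sh)^2 = σ^2/4*h := by rw [← hs2]; ring
  nlinarith [hκθx, ha2, mul_nonneg (mul_nonneg hκ.le (sq_nonneg x)) hh.le]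

/-- Bound for claim 2: translate `yu ≤ (w + σ sh)²` into `yu - y ≤ C h`. -/
lemma calc_C {κ θ σ h sh w yu y θlow : ℝ} (hσ : 0 < σ) (hκθ : 0 ≤ κ*θ) (hh : 0 < h)
    (hs2 : sh * sh = h) (hsh : 0 ≤ sh) (hw0 : 0 ≤ w) (hθκpos : 0 ≤ θlow + κ*θ)
    (hw1 : w^2 ≤ y + κ*θ*h) (hw2 : w^2 ≤ (θlow + κ*θ)*h)
    (hyu : yu ≤ (w + σ*sh)^2) :
    yu - y ≤ (κ*θ + 2*σ*Real.sqrt (θlow + κ*θ) + σ^2) * h := by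
  have hs0 : 0 ≤ Real.sqrt (θlow + κ*θ) := Real.sqrt_nonneg _
  have hss : Real.sqrt (θlow + κ*θ) ^ 2 = θlow + κ*θ := Real.sq_sqrt hθκpos
  have hws : w ≤ Real.sqrt (θlow + κ*θ) * sh := by
    apply le_of_sq_le_sq (by positivity)
    have : (Real.sqrt (θlow + κ*θ) * sh)^2 = (θlow + κ*θ) * h := by
      rw [mul_pow, hss, ← hs2]; ring
    rw [this]; exact hw2
  have hint : 2*σ*sh*w ≤ 2*σ*sh*(Real.sqrt (θlow + κ*θ)*sh) :=
    mul_le_mul_of_nonneg_left hws (by positivity)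
  have h1 : 2*σ*sh*(Real.sqrt (θlow + κ*θ)*sh) = 2*σ*Real.sqrt (θlow + κ*θ)*h := by
    rw [← hs2]; ring
  have h2 : (w + σ*sh)^2 = w^2 + 2*σ*sh*w + σ^2*(sh*sh) := by ring
  have h3 : σ^2*(sh*sh) = σ^2*h := by rw [hs2]
  nlinarith



lemma lt_of_sq_lt_sq {a b : ℝ} (hb : 0 ≤ b) (h : a^2 < b^2) : a < b := by
  by_contra hcon
  push_neg at hcon
  exact absurd (pow_le_pow_left₀ hb hcon 2) (not_le.2 h)

set_option maxHeartbeats 4000000 in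
lemma main (κ θ σ Y0 h θlow θhigh Cstar : ℝ)
    (hκ : 0 < κ) (hθ : 0 < θ) (hσ : 0 < σ) (hY0 : 0 < Y0) (hh : 0 < h)
    (hθl : θlow = σ^2 + (κ*θ/σ)^2)
    (hθhigh : θhigh = σ^2/(4*κ^2))
    (hC : Cstar = κ*θ + 2*σ*Real.sqrt (θlow + κ*θ) + σ^2)
    (A1 : κ * h ≤ 1/2)
    (A2 : θlow * h < θ)
    (A3 : θ * h < θhigh)
    (A4 : 2 * h * Y0 < θhigh)
    (A5 : (θlow + κ*θ) * h < Y0)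
    (A7 : θlow * h^2 ≤ θhigh)
    (n k : ℕ) (hkn : k ≤ n) :
    (θlow * h ≤ ynode σ Y0 h n k → ynode σ Y0 h n k ≤ θhigh / h →
      kuF κ θ σ Y0 h n k = k + 1 ∧ kdF κ θ σ Y0 h n k = k ∧
      ynode σ Y0 h (n + 1) (kuF κ θ σ Y0 h n k)
        = ynode σ Y0 h n k + σ ^ 2 / 4 * h + σ * Real.sqrt (ynode σ Y0 h n k * h) ∧
      ynode σ Y0 h (n + 1) (kdF κ θ σ Y0 h n k)
        = ynode σ Y0 h n k + σ ^ 2 / 4 * h - σ * Real.sqrt (ynode σ Y0 h n k * h)) ∧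
    (ynode σ Y0 h n k < θlow * h →
      kdF κ θ σ Y0 h n k = k ∧
      0 ≤ ynode σ Y0 h (n + 1) (kuF κ θ σ Y0 h n k) - ynode σ Y0 h n k ∧
      ynode σ Y0 h (n + 1) (kuF κ θ σ Y0 h n k) - ynode σ Y0 h n k ≤ Cstar * h) ∧
    (θhigh / h < ynode σ Y0 h n k → kuF κ θ σ Y0 h n k = k + 1) ∧
    (ynode σ Y0 h (n + 1) (kdF κ θ σ Y0 h n k)
        < ynode σ Y0 h (n + 1) (kuF κ θ σ Y0 h n k) ∧
      0 ≤ (κ * (θ - ynode σ Y0 h n k) * h + ynode σ Y0 h n k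
            - ynode σ Y0 h (n + 1) (kdF κ θ σ Y0 h n k)) /
          (ynode σ Y0 h (n + 1) (kuF κ θ σ Y0 h n k)
            - ynode σ Y0 h (n + 1) (kdF κ θ σ Y0 h n k)) ∧
      (κ * (θ - ynode σ Y0 h n k) * h + ynode σ Y0 h n k
            - ynode σ Y0 h (n + 1) (kdF κ θ σ Y0 h n k)) /
          (ynode σ Y0 h (n + 1) (kuF κ θ σ Y0 h n k)
            - ynode σ Y0 h (n + 1) (kdF κ θ σ Y0 h n k)) ≤ 1 ∧
      puF κ θ σ Y0 h n k
        = (κ * (θ - ynode σ Y0 h n k) * h + ynode σ Y0 h n k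
            - ynode σ Y0 h (n + 1) (kdF κ θ σ Y0 h n k)) /
          (ynode σ Y0 h (n + 1) (kuF κ θ σ Y0 h n k)
            - ynode σ Y0 h (n + 1) (kdF κ θ σ Y0 h n k)) ∧
      pdF κ θ σ Y0 h n k
        = (ynode σ Y0 h (n + 1) (kuF κ θ σ Y0 h n k) - ynode σ Y0 h n k
            - κ * (θ - ynode σ Y0 h n k) * h) /
          (ynode σ Y0 h (n + 1) (kuF κ θ σ Y0 h n k)
            - ynode σ Y0 h (n + 1) (kdF κ θ σ Y0 h n k))) := by
  have hsh : 0 < Real.sqrt h := Real.sqrt_pos.2 hh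
  have hs2 : Real.sqrt h * Real.sqrt h = h := Real.mul_self_sqrt hh.le
  have hy0 : 0 ≤ ynode σ Y0 h n k := ynode_nonneg σ Y0 h n k
  have hθlow_ge : σ^2 ≤ θlow := by rw [hθl]; nlinarith [sq_nonneg (κ*θ/σ)]
  have hθlow_pos : 0 < θlow := lt_of_lt_of_le (by positivity) hθlow_ge
  have hθhigh_pos : 0 < θhigh := by rw [hθhigh]; positivity
  have hθl_ge2 : (κ*θ/σ)^2 ≤ θlow := by rw [hθl]; nlinarith [sq_nonneg σ]
  have hv : 0 < ynode σ Y0 h n k + κ * (θ - ynode σ Y0 h n k) * h := by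
    nlinarith [mul_nonneg hy0 (by linarith : (0:ℝ) ≤ 1 - κ*h),
      mul_pos (mul_pos hκ hθ) hh]
  have hy_le_v : ynode σ Y0 h n k ≤ θ →
      ynode σ Y0 h n k ≤ ynode σ Y0 h n k + κ * (θ - ynode σ Y0 h n k) * h := by
    intro hyθ
    nlinarith [mul_nonneg (mul_nonneg hκ.le (sub_nonneg.2 hyθ)) hh.le]
  -- k ∈ Sd whenever y ≤ θhigh/h
  have hd_mem : ynode σ Y0 h n k ≤ θhigh / h → k ∈ Sd κ θ σ Y0 h n k := by
    intro hy2
    refine ⟨le_rfl, ?_⟩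
    rw [ynode_eq σ Y0 h (n+1) k, xc_down]
    rcases le_or_gt (xc σ Y0 h n k - σ/2*Real.sqrt h) 0 with hc | hc
    · rw [max_eq_right hc]
      nlinarith [hv]
    · have hc' : σ/2*Real.sqrt h < xc σ Y0 h n k := by linarith
      rw [max_eq_left hc.le]
      have hx : 0 < xc σ Y0 h n k := lt_trans (by positivity) hc'
      have hyx : ynode σ Y0 h n k = (xc σ Y0 h n k)^2 := by
        rw [ynode_eq, max_eq_left hx.le]
      have hxh : (xc σ Y0 h n k)^2 * h ≤ σ^2/(4*κ^2) := by
        rw [← hyx, ← hθhigh]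
        exact (le_div_iff₀ hh).1 hy2
      rw [hyx]
      exact calc_down hκ hθ hσ hh hs2 hsh hc' hxh
  -- 0 ∈ Sd whenever θhigh/h < y
  have hd0_mem : θhigh / h < ynode σ Y0 h n k → (0:ℕ) ∈ Sd κ θ σ Y0 h n k := by
    intro hy3
    refine ⟨Nat.zero_le k, ?_⟩
    have hyh : θhigh < ynode σ Y0 h n k * h := by
      rw [div_lt_iff₀ hh] at hy3; linarith
    have hnode : ynode σ Y0 h (n+1) 0 ≤ Y0 := by
      rw [ynode_eq]
      have hxle : xc σ Y0 h (n+1) 0 ≤ Real.sqrt Y0 := by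
        unfold xc
        have h0 : (0:ℝ) ≤ σ / 2 * ((n:ℝ)+1) * Real.sqrt h := by positivity
        push_cast
        nlinarith
      calc (max (xc σ Y0 h (n+1) 0) 0)^2 ≤ (max (Real.sqrt Y0) 0)^2 := sq_max_mono hxle
        _ = Y0 := by rw [max_eq_left (Real.sqrt_nonneg Y0), Real.sq_sqrt hY0.le]
    have h2Y0 : 2 * Y0 < ynode σ Y0 h n k := by
      have h1 : 2 * Y0 * h < ynode σ Y0 h n k * h := by nlinarith
      exact (mul_lt_mul_iff_left₀ hh).1 h1
    nlinarith [mul_nonneg hy0 (by linarith : (0:ℝ) ≤ 1 - 2*(κ*h)),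
      mul_pos (mul_pos hκ hθ) hh]
  have hSdne : (Sd κ θ σ Y0 h n k).Nonempty := by
    rcases le_or_gt (ynode σ Y0 h n k) (θhigh / h) with h' | h'
    · exact ⟨k, hd_mem h'⟩
    · exact ⟨0, hd0_mem h'⟩
  -- n+1 ∈ Su
  have hu_mem : (n+1) ∈ Su κ θ σ Y0 h n k := by
    refine ⟨by omega, le_rfl, ?_⟩
    have hX1 : Real.sqrt Y0 ≤ xc σ Y0 h (n+1) (n+1) := by
      unfold xc
      have h0 : (0:ℝ) ≤ σ / 2 * ((n:ℝ)+1) * Real.sqrt h := by positivity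
      push_cast
      nlinarith
    have hXpos : 0 ≤ xc σ Y0 h (n+1) (n+1) := le_trans (Real.sqrt_nonneg Y0) hX1
    have hXY0 : Y0 ≤ (xc σ Y0 h (n+1) (n+1))^2 := by
      calc Y0 = (Real.sqrt Y0)^2 := (Real.sq_sqrt hY0.le).symm
        _ ≤ _ := pow_le_pow_left₀ (Real.sqrt_nonneg Y0) hX1 2
    have hnodeX : ynode σ Y0 h (n+1) (n+1) = (xc σ Y0 h (n+1) (n+1))^2 := by
      rw [ynode_eq, max_eq_left hXpos]
    have hwa : max (xc σ Y0 h n k) 0 + σ/2*Real.sqrt h ≤ xc σ Y0 h (n+1) (n+1) := by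
      have h1 : xc σ Y0 h n k + σ/2*Real.sqrt h ≤ xc σ Y0 h (n+1) (n+1) := by
        unfold xc
        have hnk : (k:ℝ) ≤ (n:ℝ) := by exact_mod_cast hkn
        have h0 : (0:ℝ) ≤ σ / 2 * (2*((n:ℝ) - (k:ℝ))) * Real.sqrt h := by
          have hnn : (0:ℝ) ≤ (n:ℝ) - (k:ℝ) := by linarith
          positivity
        push_cast
        nlinarith
      have h2 : (0:ℝ) + σ/2*Real.sqrt h ≤ xc σ Y0 h (n+1) (n+1) := by
        unfold xc
        have h0 : (0:ℝ) ≤ σ / 2 * (n:ℝ) * Real.sqrt h := by positivity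
        have h00 := Real.sqrt_nonneg Y0
        push_cast
        nlinarith
      rcases max_cases (xc σ Y0 h n k) 0 with ⟨hm, _⟩ | ⟨hm, _⟩ <;> rw [hm] <;> linarith
    have hwsq : (max (xc σ Y0 h n k) 0)^2 = ynode σ Y0 h n k := (ynode_eq σ Y0 h n k).symm
    rw [hnodeX]
    rcases le_or_gt (θlow * h) (ynode σ Y0 h n k) with hcase | hcase
    · have hsq2 : (max (xc σ Y0 h n k) 0 + σ/2*Real.sqrt h)^2
          ≤ (xc σ Y0 h (n+1) (n+1))^2 :=
        pow_le_pow_left₀ (by positivity) hwa 2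
      have hup : ynode σ Y0 h n k + κ*(θ - ynode σ Y0 h n k)*h
          ≤ (max (xc σ Y0 h n k) 0 + σ/2*Real.sqrt h)^2 := by
        rw [← hwsq]
        exact calc_up hκ hθ hσ hh hs2 hsh (le_max_right _ 0) hθl_ge2
          (by rw [hwsq]; exact hcase)
      linarith
    · have hvlt : ynode σ Y0 h n k + κ*(θ - ynode σ Y0 h n k)*h < (θlow + κ*θ)*h := by
        nlinarith [mul_nonneg (mul_nonneg hκ.le hy0) hh.le]
      linarith
  have hSune : (Su κ θ σ Y0 h n k).Nonempty := ⟨n+1, hu_mem⟩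
  obtain ⟨hku_ge, hku_le, hv_le_yu⟩ := ku_mem hSune
  obtain ⟨hkd_le, hyd_le_v⟩ := kd_mem hSdne
  have hyu_pos : 0 < ynode σ Y0 h (n+1) (kuF κ θ σ Y0 h n k) := lt_of_lt_of_le hv hv_le_yu
  obtain ⟨hxu_pos, hyu_eq⟩ := ynode_pos_eq hyu_pos
  -- yd < yu
  have hyd_lt_yu : ynode σ Y0 h (n+1) (kdF κ θ σ Y0 h n k)
      < ynode σ Y0 h (n+1) (kuF κ θ σ Y0 h n k) := by
    have hkdku : kdF κ θ σ Y0 h n k + 1 ≤ kuF κ θ σ Y0 h n k := by omega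
    have hstep : xc σ Y0 h (n+1) (kdF κ θ σ Y0 h n k) + σ * Real.sqrt h
        ≤ xc σ Y0 h (n+1) (kuF κ θ σ Y0 h n k) := by
      rw [← xc_step]
      exact xc_mono σ Y0 h hσ.le (n+1) hkdku
    have hxd_lt : xc σ Y0 h (n+1) (kdF κ θ σ Y0 h n k)
        < xc σ Y0 h (n+1) (kuF κ θ σ Y0 h n k) := by
      nlinarith [mul_pos hσ hsh]
    have hmaxlt : max (xc σ Y0 h (n+1) (kdF κ θ σ Y0 h n k)) 0
        < xc σ Y0 h (n+1) (kuF κ θ σ Y0 h n k) := max_lt hxd_lt hxu_pos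
    calc ynode σ Y0 h (n+1) (kdF κ θ σ Y0 h n k)
        = (max (xc σ Y0 h (n+1) (kdF κ θ σ Y0 h n k)) 0)^2 := ynode_eq σ Y0 h (n+1) _
      _ < (xc σ Y0 h (n+1) (kuF κ θ σ Y0 h n k))^2 :=
          pow_lt_pow_left₀ hmaxlt (le_max_right _ 0) two_ne_zero
      _ = ynode σ Y0 h (n+1) (kuF κ θ σ Y0 h n k) := hyu_eq.symm
  have hden : 0 < ynode σ Y0 h (n+1) (kuF κ θ σ Y0 h n k)
      - ynode σ Y0 h (n+1) (kdF κ θ σ Y0 h n k) := sub_pos.2 hyd_lt_yu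
  have hr0 : 0 ≤ (κ * (θ - ynode σ Y0 h n k) * h + ynode σ Y0 h n k
        - ynode σ Y0 h (n + 1) (kdF κ θ σ Y0 h n k)) /
      (ynode σ Y0 h (n + 1) (kuF κ θ σ Y0 h n k)
        - ynode σ Y0 h (n + 1) (kdF κ θ σ Y0 h n k)) :=
    div_nonneg (by linarith) hden.le
  have hr1 : (κ * (θ - ynode σ Y0 h n k) * h + ynode σ Y0 h n k
        - ynode σ Y0 h (n + 1) (kdF κ θ σ Y0 h n k)) /
      (ynode σ Y0 h (n + 1) (kuF κ θ σ Y0 h n k)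
        - ynode σ Y0 h (n + 1) (kdF κ θ σ Y0 h n k)) ≤ 1 := by
    rw [div_le_one hden]
    linarith
  have hpu : puF κ θ σ Y0 h n k
      = (κ * (θ - ynode σ Y0 h n k) * h + ynode σ Y0 h n k
          - ynode σ Y0 h (n + 1) (kdF κ θ σ Y0 h n k)) /
        (ynode σ Y0 h (n + 1) (kuF κ θ σ Y0 h n k)
          - ynode σ Y0 h (n + 1) (kdF κ θ σ Y0 h n k)) := by
    rw [puF, min_eq_right hr1, max_eq_right hr0]
  have hpd : pdF κ θ σ Y0 h n k
      = (ynode σ Y0 h (n + 1) (kuF κ θ σ Y0 h n k) - ynode σ Y0 h n k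
          - κ * (θ - ynode σ Y0 h n k) * h) /
        (ynode σ Y0 h (n + 1) (kuF κ θ σ Y0 h n k)
          - ynode σ Y0 h (n + 1) (kdF κ θ σ Y0 h n k)) := by
    rw [pdF, hpu]
    field_simp
    ring
  -- claim 1
  have claim1 : θlow * h ≤ ynode σ Y0 h n k → ynode σ Y0 h n k ≤ θhigh / h →
      kuF κ θ σ Y0 h n k = k + 1 ∧ kdF κ θ σ Y0 h n k = k ∧
      ynode σ Y0 h (n + 1) (kuF κ θ σ Y0 h n k)
        = ynode σ Y0 h n k + σ ^ 2 / 4 * h + σ * Real.sqrt (ynode σ Y0 h n k * h) ∧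
      ynode σ Y0 h (n + 1) (kdF κ θ σ Y0 h n k)
        = ynode σ Y0 h n k + σ ^ 2 / 4 * h - σ * Real.sqrt (ynode σ Y0 h n k * h) := by
    intro hge hle
    have hy_pos : 0 < ynode σ Y0 h n k := lt_of_lt_of_le (by positivity) hge
    obtain ⟨hx_pos, hy_eq⟩ := ynode_pos_eq hy_pos
    have hxl : θlow * h ≤ (xc σ Y0 h n k)^2 := hy_eq ▸ hge
    have hxa : σ/2*Real.sqrt h < xc σ Y0 h n k := by
      apply lt_of_sq_lt_sq hx_pos.le
      have he : (σ/2*Real.sqrt h)^2 = σ^2/4*h := by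
        have hq : Real.sqrt h ^ 2 = h := Real.sq_sqrt hh.le
        linear_combination (σ^2/4) * hq
      nlinarith [mul_pos (pow_pos hσ 2) hh,
        mul_le_mul_of_nonneg_right hθlow_ge hh.le]
    have ha0 : 0 < σ/2*Real.sqrt h := by positivity
    have hsqyh : Real.sqrt (ynode σ Y0 h n k * h) = xc σ Y0 h n k * Real.sqrt h := by
      rw [hy_eq]; exact sqrt_sq_mul hx_pos.le
    have hnode_up : ynode σ Y0 h (n+1) (k+1)
        = ynode σ Y0 h n k + σ ^ 2 / 4 * h + σ * Real.sqrt (ynode σ Y0 h n k * h) := by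
      rw [ynode_eq σ Y0 h (n+1) (k+1), xc_up,
        max_eq_left (by linarith : (0:ℝ) ≤ xc σ Y0 h n k + σ/2*Real.sqrt h)]
      rw [hsqyh, hy_eq]
      have := sq_expand_plus (σ := σ) (x := xc σ Y0 h n k) hs2
      linarith
    have hnode_down : ynode σ Y0 h (n+1) k
        = ynode σ Y0 h n k + σ ^ 2 / 4 * h - σ * Real.sqrt (ynode σ Y0 h n k * h) := by
      rw [ynode_eq σ Y0 h (n+1) k, xc_down,
        max_eq_left (by linarith : (0:ℝ) ≤ xc σ Y0 h n k - σ/2*Real.sqrt h)]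
      rw [hsqyh, hy_eq]
      have := sq_expand_minus (σ := σ) (x := xc σ Y0 h n k) hs2
      linarith
    have hk1_mem : k+1 ∈ Su κ θ σ Y0 h n k := by
      refine ⟨le_rfl, by omega, ?_⟩
      rw [hnode_up, hsqyh, hy_eq]
      have h1 := calc_up hκ hθ hσ hh hs2 hsh hx_pos.le hθl_ge2 hxl
      have h2 := sq_expand_plus (σ := σ) (x := xc σ Y0 h n k) hs2
      linarith
    have hku1 : kuF κ θ σ Y0 h n k = k+1 := le_antisymm (ku_le hk1_mem) hku_ge
    have hkd1 : kdF κ θ σ Y0 h n k = k := le_antisymm hkd_le (kd_ge (hd_mem hle))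
    exact ⟨hku1, hkd1, by rw [hku1]; exact hnode_up, by rw [hkd1]; exact hnode_down⟩
  -- claim 2
  have claim2 : ynode σ Y0 h n k < θlow * h →
      kdF κ θ σ Y0 h n k = k ∧
      0 ≤ ynode σ Y0 h (n + 1) (kuF κ θ σ Y0 h n k) - ynode σ Y0 h n k ∧
      ynode σ Y0 h (n + 1) (kuF κ θ σ Y0 h n k) - ynode σ Y0 h n k ≤ Cstar * h := by
    intro hlt
    have hle : ynode σ Y0 h n k ≤ θhigh / h := by
      rw [le_div_iff₀ hh]
      nlinarith [mul_le_mul_of_nonneg_right hlt.le hh.le]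
    have hkd1 : kdF κ θ σ Y0 h n k = k := le_antisymm hkd_le (kd_ge (hd_mem hle))
    have hyθ : ynode σ Y0 h n k ≤ θ := by linarith
    have h0le : 0 ≤ ynode σ Y0 h (n + 1) (kuF κ θ σ Y0 h n k) - ynode σ Y0 h n k := by
      have := hy_le_v hyθ
      linarith
    have hθκpos : (0:ℝ) ≤ θlow + κ*θ := by positivity
    have hκθ0 : (0:ℝ) ≤ κ*θ := by positivity
    have hyub : ynode σ Y0 h (n + 1) (kuF κ θ σ Y0 h n k) - ynode σ Y0 h n k
        ≤ Cstar * h := by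
      rw [hC]
      rcases eq_or_lt_of_le hku_ge with heq | hlt2
      · have hw2 : (max (xc σ Y0 h n k) 0)^2 = ynode σ Y0 h n k :=
          (ynode_eq σ Y0 h n k).symm
        have hyu_le : ynode σ Y0 h (n+1) (kuF κ θ σ Y0 h n k)
            ≤ (max (xc σ Y0 h n k) 0 + σ*Real.sqrt h)^2 := by
          rw [← heq, ynode_eq σ Y0 h (n+1) (k+1), xc_up]
          apply pow_le_pow_left₀ (le_max_right _ 0)
          apply max_le _ (by positivity)
          have h1 : xc σ Y0 h n k ≤ max (xc σ Y0 h n k) 0 := le_max_left _ 0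
          nlinarith [mul_nonneg hσ.le hsh.le]
        exact calc_C hσ hκθ0 hh hs2 hsh.le (le_max_right _ 0) hθκpos
          (by rw [hw2]; nlinarith [mul_pos (mul_pos hκ hθ) hh])
          (by rw [hw2]; nlinarith [mul_pos (mul_pos hκ hθ) hh]) hyu_le
      · obtain ⟨m, hm⟩ : ∃ m, kuF κ θ σ Y0 h n k = m + 1 :=
          ⟨kuF κ θ σ Y0 h n k - 1, by omega⟩
        have hm1 : k+1 ≤ m := by omega
        have hm2 : m ≤ n+1 := by omega
        have hmnot := ku_notmem hSune (show m < kuF κ θ σ Y0 h n k by omega)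
        have hnd : ynode σ Y0 h (n+1) m
            < ynode σ Y0 h n k + κ*(θ - ynode σ Y0 h n k)*h := by
          by_contra hcon
          push_neg at hcon
          exact hmnot ⟨hm1, hm2, hcon⟩
        have hw2 : (max (xc σ Y0 h (n+1) m) 0)^2 = ynode σ Y0 h (n+1) m :=
          (ynode_eq σ Y0 h (n+1) m).symm
        have hyu_le : ynode σ Y0 h (n+1) (kuF κ θ σ Y0 h n k)
            ≤ (max (xc σ Y0 h (n+1) m) 0 + σ*Real.sqrt h)^2 := by
          rw [hm, ynode_eq σ Y0 h (n+1) (m+1), xc_step]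
          apply pow_le_pow_left₀ (le_max_right _ 0)
          apply max_le _ (by positivity)
          have h1 : xc σ Y0 h (n+1) m ≤ max (xc σ Y0 h (n+1) m) 0 := le_max_left _ 0
          linarith
        have hκyh : (0:ℝ) ≤ κ * ynode σ Y0 h n k * h :=
          mul_nonneg (mul_nonneg hκ.le hy0) hh.le
        exact calc_C hσ hκθ0 hh hs2 hsh.le (le_max_right _ 0) hθκpos
          (by rw [hw2]; nlinarith) (by rw [hw2]; nlinarith) hyu_le
    exact ⟨hkd1, h0le, hyub⟩
  -- claim 3
  have claim3 : θhigh / h < ynode σ Y0 h n k → kuF κ θ σ Y0 h n k = k + 1 := by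
    intro hgt
    have hθy : θ < ynode σ Y0 h n k := by
      have h1 : θ < θhigh / h := by rw [lt_div_iff₀ hh]; linarith
      linarith
    have hvley : ynode σ Y0 h n k + κ*(θ - ynode σ Y0 h n k)*h ≤ ynode σ Y0 h n k := by
      nlinarith [mul_nonneg (mul_nonneg hκ.le
        (by linarith : (0:ℝ) ≤ ynode σ Y0 h n k - θ)) hh.le]
    have hmono : ynode σ Y0 h n k ≤ ynode σ Y0 h (n+1) (k+1) := by
      rw [ynode_eq σ Y0 h n k, ynode_eq σ Y0 h (n+1) (k+1), xc_up]
      exact sq_max_mono (by nlinarith [mul_nonneg hσ.le hsh.le])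
    exact le_antisymm (ku_le ⟨le_rfl, by omega, by linarith⟩) hku_ge
  exact ⟨claim1, claim2, claim3, hyd_lt_yu, hr0, hr1, hpu, hpd⟩

end CIR

set_option maxHeartbeats 1000000 in
/- STATEMENT 11: structural properties of the CIR 'multiple jumps' tree, for
`h = T/N` small enough. -/
theorem stmt_11 (κ θ σ Y0 T : ℝ)
    (hκ : 0 < κ) (hθ : 0 < θ) (hσ : 0 < σ) (hY0 : 0 < Y0) (hT : 0 < T) :
    ∃ θlow θhigh Cstar hbar : ℝ,
      0 < θlow ∧ 0 < θhigh ∧ 0 < Cstar ∧ 0 < hbar ∧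
      ∀ N : ℕ, 1 ≤ N → T / N < hbar → ∀ n k : ℕ, k ≤ n → n + 1 ≤ N →
        ∀ hstep y yu yd : ℝ, hstep = T / N → y = ynode σ Y0 hstep n k →
          yu = ynode σ Y0 hstep (n + 1) (kuF κ θ σ Y0 hstep n k) →
          yd = ynode σ Y0 hstep (n + 1) (kdF κ θ σ Y0 hstep n k) →
          (θlow * hstep ≤ y → y ≤ θhigh / hstep →
            kuF κ θ σ Y0 hstep n k = k + 1 ∧ kdF κ θ σ Y0 hstep n k = k ∧
            yu = y + σ ^ 2 / 4 * hstep + σ * Real.sqrt (y * hstep) ∧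
            yd = y + σ ^ 2 / 4 * hstep - σ * Real.sqrt (y * hstep)) ∧
          (y < θlow * hstep →
            kdF κ θ σ Y0 hstep n k = k ∧ 0 ≤ yu - y ∧ yu - y ≤ Cstar * hstep) ∧
          (θhigh / hstep < y → kuF κ θ σ Y0 hstep n k = k + 1) ∧
          (yd < yu ∧
            0 ≤ (κ * (θ - y) * hstep + y - yd) / (yu - yd) ∧
            (κ * (θ - y) * hstep + y - yd) / (yu - yd) ≤ 1 ∧
            puF κ θ σ Y0 hstep n k = (κ * (θ - y) * hstep + y - yd) / (yu - yd) ∧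
            pdF κ θ σ Y0 hstep n k = (yu - y - κ * (θ - y) * hstep) / (yu - yd)) := by
  have hσ0 : σ ≠ 0 := hσ.ne'
  have hκ0 : κ ≠ 0 := hκ.ne'
  have hθlow_pos : (0:ℝ) < σ^2 + (κ*θ/σ)^2 := by positivity
  have hθhigh_pos : (0:ℝ) < σ^2/(4*κ^2) := by positivity
  have hsum_pos : (0:ℝ) < (σ^2 + (κ*θ/σ)^2) + κ*θ := by positivity
  refine ⟨σ^2 + (κ*θ/σ)^2, σ^2/(4*κ^2),
    κ*θ + 2*σ*Real.sqrt ((σ^2 + (κ*θ/σ)^2) + κ*θ) + σ^2,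
    min (1/(2*κ)) (min (θ/(σ^2 + (κ*θ/σ)^2)) (min ((σ^2/(4*κ^2))/θ)
      (min ((σ^2/(4*κ^2))/(2*Y0)) (min (Y0/((σ^2 + (κ*θ/σ)^2)+κ*θ))
        (Real.sqrt ((σ^2/(4*κ^2))/(σ^2 + (κ*θ/σ)^2))))))),
    hθlow_pos, hθhigh_pos, by positivity, ?_, ?_⟩
  · simp only [lt_min_iff]
    refine ⟨by positivity, by positivity, by positivity, by positivity, by positivity, ?_⟩
    exact Real.sqrt_pos.2 (by positivity)
  · intro N hN hlt n k hkn hnN hstep y yu yd hhs hy hyu hyd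
    subst hhs; subst hy; subst hyu; subst hyd
    have hNpos : (0:ℝ) < (N:ℝ) := by
      have : 0 < N := hN
      exact_mod_cast this
    have hh : 0 < T/(N:ℝ) := div_pos hT hNpos
    simp only [lt_min_iff] at hlt
    obtain ⟨h1, h2, h3, h4, h5, h6⟩ := hlt
    have A1 : κ * (T/(N:ℝ)) ≤ 1/2 := by
      have hm : κ*(T/(N:ℝ)) < κ*(1/(2*κ)) := mul_lt_mul_of_pos_left h1 hκ
      have he : κ*(1/(2*κ)) = 1/2 := by field_simp
      linarith
    have A2 : (σ^2 + (κ*θ/σ)^2) * (T/(N:ℝ)) < θ := by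
      have := (lt_div_iff₀ hθlow_pos).1 h2
      linarith
    have A3 : θ * (T/(N:ℝ)) < σ^2/(4*κ^2) := by
      have := (lt_div_iff₀ hθ).1 h3
      linarith
    have A4 : 2 * (T/(N:ℝ)) * Y0 < σ^2/(4*κ^2) := by
      have := (lt_div_iff₀ (by positivity : (0:ℝ) < 2*Y0)).1 h4
      linarith
    have A5 : ((σ^2 + (κ*θ/σ)^2) + κ*θ) * (T/(N:ℝ)) < Y0 := by
      have := (lt_div_iff₀ hsum_pos).1 h5
      linarith
    have A7 : (σ^2 + (κ*θ/σ)^2) * (T/(N:ℝ))^2 ≤ σ^2/(4*κ^2) := by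
      have hq : (T/(N:ℝ))^2 < (Real.sqrt ((σ^2/(4*κ^2))/(σ^2 + (κ*θ/σ)^2)))^2 :=
        pow_lt_pow_left₀ h6 hh.le two_ne_zero
      rw [Real.sq_sqrt (by positivity)] at hq
      have := (lt_div_iff₀ hθlow_pos).1 hq
      linarith
    exact CIR.main κ θ σ Y0 (T/(N:ℝ)) _ _ _ hκ hθ hσ hY0 hh rfl rfl rfl
      A1 A2 A3 A4 A5 A7 n k hkn
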